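/- Let d_h, τ > 0. Every root λ ∈ ℂ of the equation λ + d_h − d_h·e^{−λ τ} = 0 other than λ = 0 satisfies Re(λ) < 0, and λ = 0 is a simple root. -/

import Mathlib

theorem stmt_7 (d_h τ : ℝ) (hdh : 0 < d_h) (hτ : 0 < τ) :
    (∀ lam : ℂ, lam + (d_h : ℂ) - (d_h : ℂ) * Complex.exp (-lam * (τ : ℂ)) = 0 →
      lam ≠ 0 → lam.re < 0) ∧
    deriv (fun z : ℂ => z + (d_h : ℂ) - (d_h : ℂ) * Complex.exp (-z * (τ : ℂ))) 0 ≠ 0 := by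
  constructor
  · intro lam heq hne
    by_contra hre
    push_neg at hre
    have heq' : lam + (d_h : ℂ) = (d_h : ℂ) * Complex.exp (-lam * (τ : ℂ)) :=
      sub_eq_zero.mp heq
    have habs := congrArg (fun z : ℂ => ‖z‖) heq'
    rw [norm_mul, Complex.norm_exp] at habs
    have hre' : (-lam * (τ : ℂ)).re = -lam.re * τ := by simp
    rw [hre'] at habs
    have hexple : Real.exp (-lam.re * τ) ≤ 1 := by
      apply Real.exp_le_one_iff.mpr
      nlinarith
    have habsd : ‖((d_h : ℂ))‖ = d_h := by
      simp [abs_of_pos hdh]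
    have hle : ‖(lam + (d_h : ℂ))‖ ≤ d_h := by
      rw [habs, habsd]
      nlinarith [Real.exp_pos (-lam.re * τ)]
    have hsq : (‖(lam + (d_h : ℂ))‖)^2 = (lam.re + d_h)^2 + lam.im^2 := by
      rw [Complex.sq_norm, Complex.normSq_apply]
      simp
      ring
    have h2 : (lam.re + d_h)^2 + lam.im^2 ≤ d_h^2 := by
      rw [← hsq]
      have := norm_nonneg (lam + (d_h : ℂ))
      nlinarith
    have hre0 : lam.re = 0 := by nlinarith
    have him0 : lam.im = 0 := by nlinarith
    exact hne (Complex.ext hre0 him0)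
  · have hd : HasDerivAt (fun z : ℂ => z + (d_h : ℂ) - (d_h : ℂ) * Complex.exp (-z * (τ : ℂ)))
        (1 + (d_h : ℂ) * τ) 0 := by
      have h1 : HasDerivAt (fun z : ℂ => Complex.exp (-z * (τ : ℂ)))
          (Complex.exp (-(0:ℂ) * τ) * (-1 * τ)) 0 :=
        (((hasDerivAt_id (0:ℂ)).neg).mul_const (τ:ℂ)).cexp
      have h2 := ((hasDerivAt_id (0:ℂ)).add_const (d_h:ℂ)).sub (h1.const_mul (d_h:ℂ))
      exact h2.congr_deriv (by simp)
    rw [hd.deriv]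
    intro h
    have := congrArg Complex.re h
    simp at this
    nlinarith
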